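/- Let K : 𝒳 × 𝒳 → [0, K_max] be a bounded kernel, P and Q probability measures on 𝒳, and define the similarity-kernel population regularizer R(f, g) = E_{X∼P, X'∼Q}[(f(X) − g(X'))² K(X, X')] (with X, X' independent). Define K_Q(x') = E_{X∼P}[K(X, x')]. Then: (a) the second Gateaux derivative of R in its second argument satisfies ∂₂²R((f, g); h₁, h₂) = 2 E_{X'∼Q}[h₁(X') h₂(X') K_Q(X')]; (b) if inf_h ‖h √K_Q‖_Q / ‖h‖_Q ≥ φ > 0 then R is 2φ²-strongly convex in its second argument with respect to ‖·‖_Q; and (c) R satisfies the cross-Lipschitz bound |∂₂R((f₂, g); h) − ∂₂R((f₁, g); h)| ≤ 2 K_max ‖f₁ − f₂‖_P ‖h‖_Q. -/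

import Mathlib

open MeasureTheory

private lemma memLp_two_integrable_mul {α : Type*} [MeasurableSpace α] {μ : Measure α}
    {f g : α → ℝ} (hf : MemLp f 2 μ) (hg : MemLp g 2 μ) :
    Integrable (fun x => f x * g x) μ := by
  have hb : Integrable (fun x => f x ^ 2 + g x ^ 2) μ := hf.integrable_sq.add hg.integrable_sq
  refine hb.mono' (hf.1.mul hg.1) ?_
  refine Filter.Eventually.of_forall fun x => ?_
  rw [Real.norm_eq_abs, abs_mul]
  nlinarith [sq_nonneg (|f x| - |g x|), sq_abs (f x), sq_abs (g x), abs_nonneg (f x),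
    abs_nonneg (g x)]

/-- `L¹` norm is bounded by the `L²` norm on a probability space. -/
private lemma integral_abs_le_sqrt_integral_sq {α : Type*} [MeasurableSpace α] {μ : Measure α}
    [IsProbabilityMeasure μ] {v : α → ℝ} (hv : MemLp v 2 μ) :
    ∫ x, |v x| ∂μ ≤ Real.sqrt (∫ x, (v x) ^ 2 ∂μ) := by
  set a : ℝ := ∫ x, |v x| ∂μ with ha
  have hva : Integrable (fun x => |v x|) μ := (hv.integrable one_le_two).abs
  have hv2 : Integrable (fun x => (v x) ^ 2) μ := hv.integrable_sq
  have ha0 : 0 ≤ a := integral_nonneg fun x => abs_nonneg _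
  have hb0 : 0 ≤ ∫ x, (v x) ^ 2 ∂μ := integral_nonneg fun x => sq_nonneg _
  rw [Real.le_sqrt ha0 hb0]
  have hexp : ∫ x, (|v x| - a) ^ 2 ∂μ = (∫ x, (v x) ^ 2 ∂μ) - a ^ 2 := by
    have e1 : ∀ x, (|v x| - a) ^ 2 = (v x) ^ 2 - (2 * a) * |v x| + a ^ 2 := by
      intro x
      have : |v x| ^ 2 = (v x) ^ 2 := sq_abs _
      nlinarith [this]
    calc ∫ x, (|v x| - a) ^ 2 ∂μ
        = ∫ x, ((v x) ^ 2 - (2 * a) * |v x| + a ^ 2) ∂μ :=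
          integral_congr_ae (Filter.Eventually.of_forall fun x => e1 x)
      _ = (∫ x, ((v x) ^ 2 - (2 * a) * |v x|) ∂μ) + ∫ _x, a ^ 2 ∂μ :=
          integral_add (hv2.sub (hva.const_mul _)) (integrable_const _)
      _ = ((∫ x, (v x) ^ 2 ∂μ) - ∫ x, (2 * a) * |v x| ∂μ) + a ^ 2 := by
          rw [integral_sub hv2 (hva.const_mul _)]; simp
      _ = (∫ x, (v x) ^ 2 ∂μ) - a ^ 2 := by
          rw [integral_const_mul]
          rw [← ha]; ring
  have hnn : 0 ≤ ∫ x, (|v x| - a) ^ 2 ∂μ := integral_nonneg fun x => sq_nonneg _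
  linarith [hexp ▸ hnn]

/-- The similarity-kernel population regularizer
`R(f, g) = E_{X∼P, X'∼Q}[(f(X) − g(X'))² K(X, X')]` with Gateaux derivative
`D2((f,g); h) = 2E[(g(X') − f(X)) h(X') K(X, X')]` satisfies:
(a) its second Gateaux derivative in the second argument is the bilinear form
`(h₁, h₂) ↦ 2E_{X'∼Q}[h₁(X')h₂(X')K_Q(X')]` (expressed as an exact difference identity);
(b) under the coercivity condition `φ²‖h‖²_Q ≤ ‖h√K_Q‖²_Q` it is `2φ²`-strongly convex in
its second argument w.r.t. `‖·‖_Q`; and (c) it satisfies the cross-Lipschitz bound with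
constant `2 K_max`. -/
theorem kernel_regularizer_properties
    {𝒳 : Type*} [MeasurableSpace 𝒳] (P Q : Measure 𝒳)
    [IsProbabilityMeasure P] [IsProbabilityMeasure Q] [SigmaFinite P] [SigmaFinite Q]
    (Kmax : ℝ) (K : 𝒳 → 𝒳 → ℝ)
    (hKmeas : Measurable fun p : 𝒳 × 𝒳 => K p.1 p.2)
    (hK0 : ∀ x x', 0 ≤ K x x') (hKmax : ∀ x x', K x x' ≤ Kmax)
    (KQ : 𝒳 → ℝ) (hKQ : ∀ x', KQ x' = ∫ x, K x x' ∂P)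
    (F : Set (𝒳 → ℝ)) (hFP : ∀ f ∈ F, MemLp f 2 P) (hFQ : ∀ f ∈ F, MemLp f 2 Q)
    (R : (𝒳 → ℝ) → (𝒳 → ℝ) → ℝ)
    (hR : ∀ f g, R f g = ∫ p, (f p.1 - g p.2) ^ 2 * K p.1 p.2 ∂(P.prod Q))
    (D2 : (𝒳 → ℝ) → (𝒳 → ℝ) → (𝒳 → ℝ) → ℝ)
    (hD2 : ∀ f g h, D2 f g h = 2 * ∫ p, (g p.2 - f p.1) * h p.2 * K p.1 p.2 ∂(P.prod Q)) :
    -- (a) the second Gateaux derivative of `R` in its second argument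
    (∀ f ∈ F, ∀ g ∈ F, ∀ h₁, MemLp h₁ 2 Q → ∀ h₂, MemLp h₂ 2 Q →
      D2 f (fun x => g x + h₂ x) h₁ - D2 f g h₁
        = 2 * ∫ x', h₁ x' * h₂ x' * KQ x' ∂Q) ∧
    -- (b) `2φ²`-strong convexity under the coercivity condition
    (∀ φ : ℝ, 0 < φ →
      (∀ h : 𝒳 → ℝ, MemLp h 2 Q → φ ^ 2 * ∫ x', (h x') ^ 2 ∂Q
        ≤ ∫ x', (h x') ^ 2 * KQ x' ∂Q) →
      ∀ f ∈ F, ∀ g₁ ∈ F, ∀ g₂ ∈ F,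
        R f g₁ ≥ R f g₂ + D2 f g₂ (fun x => g₁ x - g₂ x)
          + (2 * φ ^ 2) / 2 * ∫ x', (g₁ x' - g₂ x') ^ 2 ∂Q) ∧
    -- (c) cross-Lipschitz bound with constant `2 K_max`
    (∀ f₁ ∈ F, ∀ f₂ ∈ F, ∀ g ∈ F, ∀ h : 𝒳 → ℝ, MemLp h 2 Q →
      |D2 f₂ g h - D2 f₁ g h|
        ≤ 2 * Kmax * Real.sqrt (∫ x, (f₁ x - f₂ x) ^ 2 ∂P)
            * Real.sqrt (∫ x', (h x') ^ 2 ∂Q)) := by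
  -- basic facts about the kernel
  have hX : Nonempty 𝒳 := by
    by_contra h
    rw [not_nonempty_iff] at h
    have h1 : P Set.univ = 1 := measure_univ
    rw [Set.univ_eq_empty_iff.mpr h, measure_empty] at h1
    exact zero_ne_one h1
  have hKmax0 : 0 ≤ Kmax := by
    obtain ⟨x⟩ := hX
    exact le_trans (hK0 x x) (hKmax x x)
  have hKb : ∀ p : 𝒳 × 𝒳, ‖K p.1 p.2‖ ≤ Kmax := by
    intro p
    rw [Real.norm_eq_abs, abs_of_nonneg (hK0 _ _)]
    exact hKmax _ _
  -- lifting `MemLp` functions to the product space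
  have mpf : MeasurePreserving Prod.fst (P.prod Q) P := ⟨measurable_fst, by simp⟩
  have mps : MeasurePreserving Prod.snd (P.prod Q) Q := ⟨measurable_snd, by simp⟩
  have liftP : ∀ u : 𝒳 → ℝ, MemLp u 2 P → MemLp (fun p : 𝒳 × 𝒳 => u p.1) 2 (P.prod Q) :=
    fun u hu => hu.comp_measurePreserving mpf
  have liftQ : ∀ v : 𝒳 → ℝ, MemLp v 2 Q → MemLp (fun p : 𝒳 × 𝒳 => v p.2) 2 (P.prod Q) :=
    fun v hv => hv.comp_measurePreserving mps
  -- multiplying an integrable function by the kernel keeps it integrable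
  have HK : ∀ W : 𝒳 × 𝒳 → ℝ, Integrable W (P.prod Q) →
      Integrable (fun p => W p * K p.1 p.2) (P.prod Q) := by
    intro W hW
    have := hW.bdd_mul hKmeas.aestronglyMeasurable (Filter.Eventually.of_forall hKb)
    exact this.congr (Filter.Eventually.of_forall fun p => mul_comm _ _)
  have Hmul : ∀ W1 W2 : 𝒳 × 𝒳 → ℝ, MemLp W1 2 (P.prod Q) → MemLp W2 2 (P.prod Q) →
      Integrable (fun p => W1 p * W2 p * K p.1 p.2) (P.prod Q) :=
    fun W1 W2 h1 h2 => HK _ (memLp_two_integrable_mul h1 h2)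
  -- the Fubini computation producing `K_Q`
  have HF : ∀ w1 w2 : 𝒳 → ℝ, MemLp w1 2 Q → MemLp w2 2 Q →
      ∫ p, w1 p.2 * w2 p.2 * K p.1 p.2 ∂(P.prod Q) = ∫ x', w1 x' * w2 x' * KQ x' ∂Q := by
    intro w1 w2 h1 h2
    have hint : Integrable (fun p : 𝒳 × 𝒳 => w1 p.2 * w2 p.2 * K p.1 p.2) (P.prod Q) :=
      Hmul _ _ (liftQ _ h1) (liftQ _ h2)
    rw [integral_prod_symm _ hint]
    refine integral_congr_ae (Filter.Eventually.of_forall fun y => ?_)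
    simp only
    rw [integral_const_mul, hKQ y]
  refine ⟨?_, ?_, ?_⟩
  -- (a)
  · intro f hf g hg h₁ hh₁ h₂ hh₂
    have hfP := hFP f hf
    have hgQ := hFQ g hg
    have I1 : Integrable (fun p => (g p.2 - f p.1) * h₁ p.2 * K p.1 p.2) (P.prod Q) :=
      Hmul _ _ ((liftQ g hgQ).sub (liftP f hfP)) (liftQ h₁ hh₁)
    have I2 : Integrable (fun p => h₂ p.2 * h₁ p.2 * K p.1 p.2) (P.prod Q) :=
      Hmul _ _ (liftQ h₂ hh₂) (liftQ h₁ hh₁)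
    rw [hD2, hD2]
    have key : (∫ p, ((fun x => g x + h₂ x) p.2 - f p.1) * h₁ p.2 * K p.1 p.2 ∂(P.prod Q))
        = (∫ p, (g p.2 - f p.1) * h₁ p.2 * K p.1 p.2 ∂(P.prod Q))
          + ∫ p, h₂ p.2 * h₁ p.2 * K p.1 p.2 ∂(P.prod Q) := by
      rw [← integral_add I1 I2]
      refine integral_congr_ae (Filter.Eventually.of_forall fun p => ?_)
      beta_reduce
      ring
    have hfub := HF h₂ h₁ hh₂ hh₁
    have comm : ∫ x', h₂ x' * h₁ x' * KQ x' ∂Q = ∫ x', h₁ x' * h₂ x' * KQ x' ∂Q :=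
      integral_congr_ae (Filter.Eventually.of_forall fun x => by ring)
    rw [key]
    linarith [hfub, comm]
  -- (b)
  · intro φ hφ hcoer f hf g₁ hg₁ g₂ hg₂
    have hfP := hFP f hf
    have hg₁Q := hFQ g₁ hg₁
    have hg₂Q := hFQ g₂ hg₂
    have hdQ : MemLp (fun x => g₁ x - g₂ x) 2 Q := hg₁Q.sub hg₂Q
    have MF : MemLp (fun p : 𝒳 × 𝒳 => f p.1 - g₂ p.2) 2 (P.prod Q) :=
      (liftP f hfP).sub (liftQ g₂ hg₂Q)
    have MG : MemLp (fun p : 𝒳 × 𝒳 => g₂ p.2 - f p.1) 2 (P.prod Q) :=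
      (liftQ g₂ hg₂Q).sub (liftP f hfP)
    have MD : MemLp (fun p : 𝒳 × 𝒳 => g₁ p.2 - g₂ p.2) 2 (P.prod Q) :=
      (liftQ g₁ hg₁Q).sub (liftQ g₂ hg₂Q)
    have I1 : Integrable (fun p => (f p.1 - g₂ p.2) * (f p.1 - g₂ p.2) * K p.1 p.2) (P.prod Q) :=
      Hmul _ _ MF MF
    have I1' : Integrable (fun p => (f p.1 - g₂ p.2) ^ 2 * K p.1 p.2) (P.prod Q) :=
      I1.congr (Filter.Eventually.of_forall fun p => by beta_reduce; rw [sq])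
    have I2 : Integrable (fun p => (g₂ p.2 - f p.1) * (g₁ p.2 - g₂ p.2) * K p.1 p.2) (P.prod Q) :=
      Hmul _ _ MG MD
    have I3 : Integrable (fun p => (g₁ p.2 - g₂ p.2) * (g₁ p.2 - g₂ p.2) * K p.1 p.2) (P.prod Q) :=
      Hmul _ _ MD MD
    have I2' : Integrable (fun p : 𝒳 × 𝒳 =>
        (2 : ℝ) * ((g₂ p.2 - f p.1) * (g₁ p.2 - g₂ p.2) * K p.1 p.2)) (P.prod Q) :=
      I2.const_mul 2
    have I23 : Integrable (fun p : 𝒳 × 𝒳 =>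
        (2 : ℝ) * ((g₂ p.2 - f p.1) * (g₁ p.2 - g₂ p.2) * K p.1 p.2)
          + (g₁ p.2 - g₂ p.2) * (g₁ p.2 - g₂ p.2) * K p.1 p.2) (P.prod Q) :=
      I2'.add I3
    rw [hR, hR, hD2]
    have key : (∫ p, (f p.1 - g₁ p.2) ^ 2 * K p.1 p.2 ∂(P.prod Q))
        = (∫ p, (f p.1 - g₂ p.2) ^ 2 * K p.1 p.2 ∂(P.prod Q))
          + 2 * (∫ p, (g₂ p.2 - f p.1) * (g₁ p.2 - g₂ p.2) * K p.1 p.2 ∂(P.prod Q))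
          + ∫ p, (g₁ p.2 - g₂ p.2) * (g₁ p.2 - g₂ p.2) * K p.1 p.2 ∂(P.prod Q) := by
      rw [show (fun p : 𝒳 × 𝒳 => (f p.1 - g₁ p.2) ^ 2 * K p.1 p.2)
          = fun p : 𝒳 × 𝒳 => (f p.1 - g₂ p.2) ^ 2 * K p.1 p.2
            + ((2 : ℝ) * ((g₂ p.2 - f p.1) * (g₁ p.2 - g₂ p.2) * K p.1 p.2)
              + (g₁ p.2 - g₂ p.2) * (g₁ p.2 - g₂ p.2) * K p.1 p.2)
          from funext fun p => by ring]
      rw [integral_add I1' I23, integral_add I2' I3, integral_const_mul]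
      ring
    have hfub := HF (fun x => g₁ x - g₂ x) (fun x => g₁ x - g₂ x) hdQ hdQ
    have hsq : ∫ x', (g₁ x' - g₂ x') * (g₁ x' - g₂ x') * KQ x' ∂Q
        = ∫ x', (g₁ x' - g₂ x') ^ 2 * KQ x' ∂Q :=
      integral_congr_ae (Filter.Eventually.of_forall fun x => by ring)
    have hco := hcoer (fun x => g₁ x - g₂ x) hdQ
    beta_reduce at hfub hco ⊢
    have hhalf : (2 * φ ^ 2) / 2 * (∫ x', (g₁ x' - g₂ x') ^ 2 ∂Q)
        = φ ^ 2 * ∫ x', (g₁ x' - g₂ x') ^ 2 ∂Q := by ring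
    linarith [key, hfub, hsq, hco, hhalf]
  -- (c)
  · intro f₁ hf₁ f₂ hf₂ g hg h hh
    have hf₁P := hFP f₁ hf₁
    have hf₂P := hFP f₂ hf₂
    have hgQ := hFQ g hg
    have huP : MemLp (fun x => f₁ x - f₂ x) 2 P := hf₁P.sub hf₂P
    have I1 : Integrable (fun p => (g p.2 - f₂ p.1) * h p.2 * K p.1 p.2) (P.prod Q) :=
      Hmul _ _ ((liftQ g hgQ).sub (liftP f₂ hf₂P)) (liftQ h hh)
    have I2 : Integrable (fun p => (g p.2 - f₁ p.1) * h p.2 * K p.1 p.2) (P.prod Q) :=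
      Hmul _ _ ((liftQ g hgQ).sub (liftP f₁ hf₁P)) (liftQ h hh)
    have Iu : Integrable (fun p => (f₁ p.1 - f₂ p.1) * h p.2 * K p.1 p.2) (P.prod Q) :=
      Hmul _ _ (liftP _ huP) (liftQ h hh)
    have diff : D2 f₂ g h - D2 f₁ g h
        = 2 * ∫ p, (f₁ p.1 - f₂ p.1) * h p.2 * K p.1 p.2 ∂(P.prod Q) := by
      rw [hD2, hD2, ← mul_sub, ← integral_sub I1 I2]
      congr 1
      exact integral_congr_ae (Filter.Eventually.of_forall fun p => by ring)
    have habs : MemLp (fun x => |f₁ x - f₂ x|) 2 P := huP.norm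
    have hhabs : MemLp (fun x => |h x|) 2 Q := hh.norm
    have Ib : Integrable (fun p : 𝒳 × 𝒳 => |f₁ p.1 - f₂ p.1| * |h p.2| * Kmax) (P.prod Q) :=
      (memLp_two_integrable_mul (liftP _ habs) (liftQ _ hhabs)).mul_const Kmax
    have step1 : |∫ p, (f₁ p.1 - f₂ p.1) * h p.2 * K p.1 p.2 ∂(P.prod Q)|
        ≤ ∫ p, |f₁ p.1 - f₂ p.1| * |h p.2| * |K p.1 p.2| ∂(P.prod Q) := by
      simpa [Real.norm_eq_abs, abs_mul] using
        norm_integral_le_integral_norm (fun p : 𝒳 × 𝒳 => (f₁ p.1 - f₂ p.1) * h p.2 * K p.1 p.2)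
          (μ := P.prod Q)
    have step2 : (∫ p, |f₁ p.1 - f₂ p.1| * |h p.2| * |K p.1 p.2| ∂(P.prod Q))
        ≤ ∫ p, |f₁ p.1 - f₂ p.1| * |h p.2| * Kmax ∂(P.prod Q) := by
      refine integral_mono_of_nonneg
        (Filter.Eventually.of_forall fun p => by positivity) Ib
        (Filter.Eventually.of_forall fun p => ?_)
      beta_reduce
      rw [abs_of_nonneg (hK0 _ _)]
      have h1 : 0 ≤ |f₁ p.1 - f₂ p.1| * |h p.2| := mul_nonneg (abs_nonneg _) (abs_nonneg _)
      exact mul_le_mul_of_nonneg_left (hKmax _ _) h1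
    have step3 : (∫ p, |f₁ p.1 - f₂ p.1| * |h p.2| * Kmax ∂(P.prod Q))
        = (∫ x, |f₁ x - f₂ x| ∂P) * (∫ x', |h x'| ∂Q) * Kmax := by
      rw [integral_mul_const]
      congr 1
      exact integral_prod_mul (fun x => |f₁ x - f₂ x|) (fun x' => |h x'|)
    have s4a : (∫ x, |f₁ x - f₂ x| ∂P) ≤ Real.sqrt (∫ x, (f₁ x - f₂ x) ^ 2 ∂P) :=
      integral_abs_le_sqrt_integral_sq huP
    have s4b : (∫ x', |h x'| ∂Q) ≤ Real.sqrt (∫ x', (h x') ^ 2 ∂Q) :=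
      integral_abs_le_sqrt_integral_sq hh
    have hIa : 0 ≤ ∫ x, |f₁ x - f₂ x| ∂P := integral_nonneg fun x => abs_nonneg _
    have hIb : 0 ≤ ∫ x', |h x'| ∂Q := integral_nonneg fun x => abs_nonneg _
    rw [diff, abs_mul, abs_two]
    calc (2 : ℝ) * |∫ p, (f₁ p.1 - f₂ p.1) * h p.2 * K p.1 p.2 ∂(P.prod Q)|
        ≤ 2 * ((∫ x, |f₁ x - f₂ x| ∂P) * (∫ x', |h x'| ∂Q) * Kmax) := by
          have hc := le_trans step1 (le_trans step2 (le_of_eq step3))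
          linarith
      _ ≤ 2 * (Real.sqrt (∫ x, (f₁ x - f₂ x) ^ 2 ∂P)
            * Real.sqrt (∫ x', (h x') ^ 2 ∂Q) * Kmax) := by
          gcongr
      _ = 2 * Kmax * Real.sqrt (∫ x, (f₁ x - f₂ x) ^ 2 ∂P)
            * Real.sqrt (∫ x', (h x') ^ 2 ∂Q) := by ring
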